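/- For an endomorphism X of a finite-dimensional real vector space, each of the elliptic, hyperbolic, and nilpotent components of the refined additive Jordan decomposition X = E + H + N is a real polynomial in X. -/

import Mathlib

open TensorProduct

/-- An endomorphism of a vector space over `K` is diagonalizable if its eigenspaces span. -/
def IsDiag {K M : Type*} [Field K] [AddCommGroup M] [Module K M]
    (f : Module.End K M) : Prop :=
  (⨆ μ : K, f.eigenspace μ) = ⊤

/-- The complexification of a real endomorphism, acting on `ℂ ⊗[ℝ] V`. -/
noncomputable def cplx {V : Type*} [AddCommGroup V] [Module ℝ V]
    (X : Module.End ℝ V) : Module.End ℂ (ℂ ⊗[ℝ] V) :=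
  LinearMap.baseChange ℂ X

/-- `X` is (additively) elliptic: semisimple with purely imaginary eigenvalues. -/
noncomputable def IsElliptic {V : Type*} [AddCommGroup V] [Module ℝ V]
    (X : Module.End ℝ V) : Prop :=
  IsDiag (cplx X) ∧ ∀ μ : ℂ, (cplx X).HasEigenvalue μ → μ.re = 0

/-- `X` is (additively) hyperbolic: semisimple with real eigenvalues. -/
noncomputable def IsHyperbolic {V : Type*} [AddCommGroup V] [Module ℝ V]
    (X : Module.End ℝ V) : Prop :=
  IsDiag (cplx X) ∧ ∀ μ : ℂ, (cplx X).HasEigenvalue μ → μ.im = 0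

/-- `g` is (multiplicatively) elliptic: semisimple with eigenvalues of absolute value one. -/
noncomputable def IsMultElliptic {V : Type*} [AddCommGroup V] [Module ℝ V]
    (g : Module.End ℝ V) : Prop :=
  IsDiag (cplx g) ∧ ∀ μ : ℂ, (cplx g).HasEigenvalue μ → ‖μ‖ = 1

/-- `g` is (multiplicatively) hyperbolic: semisimple with positive real eigenvalues. -/
noncomputable def IsMultHyperbolic {V : Type*} [AddCommGroup V] [Module ℝ V]
    (g : Module.End ℝ V) : Prop :=
  IsDiag (cplx g) ∧ ∀ μ : ℂ, (cplx g).HasEigenvalue μ → μ.im = 0 ∧ 0 < μ.re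

/- ### Auxiliary lemmas -/

open Polynomial

section Aux

variable {V : Type*} [AddCommGroup V] [Module ℝ V]

lemma Commute.aeval_right' {R A : Type*} [CommSemiring R] [Semiring A] [Algebra R A]
    {a b : A} (h : Commute a b) (p : R[X]) : Commute a (Polynomial.aeval b p) := by
  induction p using Polynomial.induction_on' with
  | add p q hp hq => rw [map_add]; exact hp.add_right hq
  | monomial n r =>
      rw [Polynomial.aeval_monomial]
      exact (Algebra.commute_algebraMap_right r a).mul_right (h.pow_right n)

lemma cplx_aeval (f : Module.End ℝ V) (p : ℝ[X]) :
    cplx (aeval f p) = aeval (cplx f) (p.map (algebraMap ℝ ℂ)) := by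
  rw [Polynomial.aeval_map_algebraMap]
  exact (Polynomial.aeval_algHom_apply (Module.End.baseChangeHom ℝ ℂ V) f p).symm

lemma cplx_inj {f g : Module.End ℝ V} (h : cplx f = cplx g) : f = g := by
  ext v
  have h1 : (1 : ℂ) ⊗ₜ[ℝ] (f v) = (1 : ℂ) ⊗ₜ[ℝ] (g v) := by
    have := LinearMap.congr_fun h ((1:ℂ) ⊗ₜ[ℝ] v)
    simpa [cplx] using this
  have h2 := congrArg ((TensorProduct.lid ℝ V).toLinearMap.comp
      (LinearMap.rTensor V Complex.reLm)) h1
  simpa using h2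

lemma IsDiag.isSemisimple {K M : Type*} [Field K] [AddCommGroup M] [Module K M]
    [FiniteDimensional K M] {f : Module.End K M} (h : IsDiag f) : f.IsSemisimple := by
  classical
  set σ : Finset K := (minpoly K f).roots.toFinset with hσ
  set P : K[X] := ∏ μ ∈ σ, (X - C μ) with hP
  have hsep : P.Separable := by
    rw [hP]
    exact (Polynomial.separable_prod_X_sub_C_iff').mpr (fun i _ j _ h => h)
  have hann : aeval f P = 0 := by
    apply LinearMap.ext
    intro v
    have hv : v ∈ (⨆ μ : K, f.eigenspace μ) := h ▸ Submodule.mem_top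
    rw [LinearMap.zero_apply]
    induction hv using Submodule.iSup_induction' with
    | mem μ v hv =>
      rcases eq_or_ne v 0 with rfl | hv0
      · simp
      · have hev : f.HasEigenvector μ v := ⟨hv, hv0⟩
        rw [Module.End.aeval_apply_of_hasEigenvector hev]
        have hμ : μ ∈ σ := by
          rw [hσ, Multiset.mem_toFinset, mem_roots (minpoly.ne_zero_of_finite K f)]
          exact Module.End.isRoot_of_hasEigenvalue (Module.End.hasEigenvalue_of_hasEigenvector hev)
        have : P.eval μ = 0 := by
          rw [hP, eval_prod]
          exact Finset.prod_eq_zero hμ (by simp)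
        rw [this, zero_smul]
    | zero => simp
    | add x y _ _ hx hy => rw [map_add, hx, hy, add_zero]
  exact Module.End.isSemisimple_of_squarefree_aeval_eq_zero hsep.squarefree hann

lemma eval_map_star' (p : ℂ[X]) (μ : ℂ) :
    (p.map (starRingEnd ℂ)).eval μ = star (p.eval (star μ)) := by
  induction p using Polynomial.induction_on' with
  | add p q hp hq => simp [hp, hq]
  | monomial n a => simp [mul_comm]

/-- real part polynomial -/
noncomputable def reP (P : ℂ[X]) : ℝ[X] :=
  ∑ k ∈ Finset.range (P.natDegree + 1), C ((P.coeff k).re) * X ^ k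

lemma reP_coeff (P : ℂ[X]) (m : ℕ) : (reP P).coeff m = (P.coeff m).re := by
  rw [reP, finset_sum_coeff]
  simp_rw [coeff_C_mul, coeff_X_pow, mul_ite, mul_one, mul_zero]
  rw [Finset.sum_ite_eq (Finset.range (P.natDegree + 1)) m (fun k => (P.coeff k).re)]
  split_ifs with hm
  · rfl
  · rw [Finset.mem_range, not_lt] at hm
    rw [Polynomial.coeff_eq_zero_of_natDegree_lt (by omega)]
    simp

lemma reP_map (P : ℂ[X]) :
    (reP P).map (algebraMap ℝ ℂ) = Polynomial.C (2⁻¹ : ℂ) * (P + P.map (starRingEnd ℂ)) := by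
  ext m
  rw [coeff_map, reP_coeff, coeff_C_mul, coeff_add, coeff_map]
  have := Complex.add_conj (P.coeff m)
  rw [starRingEnd_apply] at this ⊢
  rw [this]
  push_cast
  rw [Complex.coe_algebraMap]
  ring

end Aux

set_option maxHeartbeats 1000000 in
theorem additive_jordan_components_are_polynomials
    {V : Type*} [AddCommGroup V] [Module ℝ V] [FiniteDimensional ℝ V]
    (X E H N : Module.End ℝ V)
    (hEH : Commute E H) (hEN : Commute E N) (hHN : Commute H N)
    (hE : IsElliptic E) (hH : IsHyperbolic H) (hN : IsNilpotent N)
    (hX : X = E + H + N) :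
    ∃ p q r : Polynomial ℝ,
      E = Polynomial.aeval X p ∧ H = Polynomial.aeval X q ∧ N = Polynomial.aeval X r := by
  classical
  set S : Module.End ℝ V := E + H with hS
  have hSN : Commute S N := hEN.add_left hHN
  have hXS : Commute X S := by rw [hX]; exact (Commute.refl S).add_left hSN.symm
  have hXN : Commute X N := by rw [hX]; exact hSN.add_left (Commute.refl N)
  -- the base change algebra hom
  set Φ := Module.End.baseChangeHom ℝ ℂ V with hΦ
  have hΦapp : ∀ f : Module.End ℝ V, Φ f = cplx f := fun _ => rfl
  have hcEH : Commute (cplx E) (cplx H) := by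
    rw [← hΦapp, ← hΦapp]; exact hEH.map Φ
  have hcS_add : cplx S = cplx E + cplx H := by
    rw [← hΦapp, ← hΦapp, ← hΦapp, hS, map_add]
  -- semisimplicity over ℂ
  have hcE_ss : (cplx E).IsSemisimple := hE.1.isSemisimple
  have hcH_ss : (cplx H).IsSemisimple := hH.1.isSemisimple
  have hcS_ss : (cplx S).IsSemisimple := by
    rw [hcS_add]; exact Module.End.IsSemisimple.add_of_commute hcEH hcE_ss hcH_ss
  -- Jordan-Chevalley decomposition of X
  obtain ⟨n, hn_mem, s, hs_mem, hn_nil, hs_ss, hXns⟩ :=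
    Module.End.exists_isNilpotent_isSemisimple (f := X)
  rw [Algebra.adjoin_singleton_eq_range_aeval] at hn_mem hs_mem
  obtain ⟨pn, hpn0⟩ := hn_mem
  obtain ⟨ps, hps0⟩ := hs_mem
  have hpn : Polynomial.aeval X pn = n := hpn0
  have hps : Polynomial.aeval X ps = s := hps0
  -- uniqueness: s = S and n = N
  have h1 : n + s = S + N := by rw [← hXns, hX, hS]
  have h2 : s - S = N - n := by
    rw [sub_eq_sub_iff_add_eq_add, add_comm s n, h1, add_comm]
  have hNn : Commute N n := by rw [← hpn]; exact hXN.symm.aeval_right' pn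
  have hd_nil : IsNilpotent (s - S) := by rw [h2]; exact hNn.isNilpotent_sub hN hn_nil
  have hcs_ss : (cplx s).IsSemisimple := by
    apply Module.End.isSemisimple_of_squarefree_aeval_eq_zero
      (p := (minpoly ℝ s).map (algebraMap ℝ ℂ))
    · exact ((PerfectField.separable_iff_squarefree.mpr hs_ss.minpoly_squarefree).map).squarefree
    · rw [← cplx_aeval, minpoly.aeval]
      rw [← hΦapp]; exact map_zero Φ
  have hSs : Commute S s := by rw [← hps]; exact hXS.symm.aeval_right' ps
  have hcd_ss : (cplx (s - S)).IsSemisimple := by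
    rw [← hΦapp, map_sub, hΦapp, hΦapp]
    exact Module.End.IsSemisimple.sub_of_commute (by rw [← hΦapp, ← hΦapp]; exact hSs.symm.map Φ)
      hcs_ss hcS_ss
  have hcd_nil : IsNilpotent (cplx (s - S)) := by
    rw [← hΦapp]; exact hd_nil.map Φ
  have hd0 : s - S = 0 := by
    apply cplx_inj
    rw [Module.End.eq_zero_of_isNilpotent_isSemisimple hcd_nil hcd_ss, ← hΦapp, map_zero]
  have hsS : s = S := by rwa [sub_eq_zero] at hd0
  have hnN : n = N := by
    have := h2; rw [hd0, eq_comm, sub_eq_zero] at this; exact this.symm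
  -- Now find a real polynomial q with H = aeval S q, via interpolation over ℂ.
  set Sc := cplx S with hSc
  set σ' : Finset ℂ :=
    (minpoly ℂ Sc).roots.toFinset ∪ ((minpoly ℂ Sc).roots.toFinset).image (starRingEnd ℂ)
    with hσ'
  have hσ'conj : ∀ μ ∈ σ', (starRingEnd ℂ) μ ∈ σ' := by
    intro μ hμ
    rw [hσ', Finset.mem_union] at hμ ⊢
    rcases hμ with hμ | hμ
    · exact Or.inr (Finset.mem_image_of_mem _ hμ)
    · rw [Finset.mem_image] at hμ
      obtain ⟨ν, hν, rfl⟩ := hμ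
      exact Or.inl (by simpa using hν)
  set P : ℂ[X] := Lagrange.interpolate σ' id (fun μ => (μ.re : ℂ)) with hPdef
  set q : ℝ[X] := reP P with hq
  set qc : ℂ[X] := q.map (algebraMap ℝ ℂ) with hqc
  have hqc_eval : ∀ μ ∈ σ', qc.eval μ = (μ.re : ℂ) := by
    intro μ hμ
    rw [hqc, hq, reP_map, eval_mul, eval_C, eval_add, eval_map_star']
    have e1 : P.eval μ = (μ.re : ℂ) :=
      Lagrange.eval_interpolate_at_node (s := σ') (v := id) (i := μ)
        (fun μ => (μ.re : ℂ)) (Set.injOn_id _) hμ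
    have e2 : P.eval (star μ) = ((star μ).re : ℂ) :=
      Lagrange.eval_interpolate_at_node (s := σ') (v := id) (i := star μ)
        (fun μ => (μ.re : ℂ)) (Set.injOn_id _) (hσ'conj μ hμ)
    rw [e1, e2]
    simp only [Complex.star_def, Complex.conj_re, Complex.conj_ofReal]
    ring
  -- simultaneous diagonalization of cplx E, cplx H
  set f : Bool → Module.End ℂ (ℂ ⊗[ℝ] V) := fun b => cond b (cplx E) (cplx H) with hf
  have hfc : Pairwise fun i j => Commute (f i) (f j) := by
    intro i j hij
    cases i <;> cases j <;> simp only [hf, cond] at *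
    · exact absurd rfl hij
    · exact hcEH.symm
    · exact hcEH
    · exact absurd rfl hij
  have hE_fss : (cplx E).IsFinitelySemisimple := hcE_ss.isFinitelySemisimple
  have hH_fss : (cplx H).IsFinitelySemisimple := hcH_ss.isFinitelySemisimple
  have h' : ∀ i, ⨆ μ, (f i).maxGenEigenspace μ = ⊤ := by
    intro i
    cases i <;> simp only [hf, cond]
    · calc ⨆ μ, (cplx H).maxGenEigenspace μ = ⨆ μ, (cplx H).eigenspace μ := by
            simp_rw [hH_fss.maxGenEigenspace_eq_eigenspace]
        _ = ⊤ := hH.1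
    · calc ⨆ μ, (cplx E).maxGenEigenspace μ = ⨆ μ, (cplx E).eigenspace μ := by
            simp_rw [hE_fss.maxGenEigenspace_eq_eigenspace]
        _ = ⊤ := hE.1
  have hT := Module.End.iSup_iInf_maxGenEigenspace_eq_top_of_iSup_maxGenEigenspace_eq_top_of_commute
    f hfc h'
  -- the difference endomorphism vanishes
  set D : Module.End ℂ (ℂ ⊗[ℝ] V) := cplx H - Polynomial.aeval Sc qc with hD
  have hker : ∀ (χ : Bool → ℂ), (⨅ i, (f i).maxGenEigenspace (χ i)) ≤ LinearMap.ker D := by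
    intro χ m hm
    have hmE : m ∈ (cplx E).eigenspace (χ true) := by
      have := (Submodule.mem_iInf _).mp hm true
      rwa [show f true = cplx E from rfl, hE_fss.maxGenEigenspace_eq_eigenspace] at this
    have hmH : m ∈ (cplx H).eigenspace (χ false) := by
      have := (Submodule.mem_iInf _).mp hm false
      rwa [show f false = cplx H from rfl, hH_fss.maxGenEigenspace_eq_eigenspace] at this
    rcases eq_or_ne m 0 with rfl | hm0
    · simp
    · set μe := χ true
      set μh := χ false
      have hvE : (cplx E).HasEigenvector μe m := ⟨hmE, hm0⟩
      have hvH : (cplx H).HasEigenvector μh m := ⟨hmH, hm0⟩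
      have hre0 : μe.re = 0 := hE.2 μe (Module.End.hasEigenvalue_of_hasEigenvector hvE)
      have him0 : μh.im = 0 := hH.2 μh (Module.End.hasEigenvalue_of_hasEigenvector hvH)
      have hSm : Sc m = (μe + μh) • m := by
        rw [hcS_add, LinearMap.add_apply, Module.End.mem_eigenspace_iff.mp hmE,
          Module.End.mem_eigenspace_iff.mp hmH, add_smul]
      have hvS : Sc.HasEigenvector (μe + μh) m := ⟨Module.End.mem_eigenspace_iff.mpr hSm, hm0⟩
      have hroot : (μe + μh) ∈ σ' := by
        rw [hσ', Finset.mem_union]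
        left
        rw [Multiset.mem_toFinset, mem_roots (minpoly.ne_zero_of_finite ℂ Sc)]
        exact Module.End.isRoot_of_hasEigenvalue
          (Module.End.hasEigenvalue_of_hasEigenvector hvS)
      have hre : (((μe + μh).re : ℝ) : ℂ) = μh := by
        apply Complex.ext
        · simp [hre0]
        · simp [him0]
      rw [LinearMap.mem_ker, hD, LinearMap.sub_apply,
        Module.End.aeval_apply_of_hasEigenvector hvS, hqc_eval _ hroot, hre,
        Module.End.mem_eigenspace_iff.mp hmH, sub_self]
  have hD0 : D = 0 := by
    rw [← LinearMap.ker_eq_top, eq_top_iff, ← hT]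
    exact iSup_le hker
  have hHq : cplx H = Polynomial.aeval Sc qc := by rwa [hD, sub_eq_zero] at hD0
  have hHS : H = Polynomial.aeval S q := by
    apply cplx_inj
    rw [cplx_aeval, hHq, hSc, hqc]
  -- assemble
  refine ⟨ps - q.comp ps, q.comp ps, pn, ?_, ?_, ?_⟩
  · rw [map_sub, Polynomial.aeval_comp, hps, hsS, ← hHS]
    rw [hS]; abel
  · rw [Polynomial.aeval_comp, hps, hsS, ← hHS]
  · rw [hpn, hnN]
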